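/- arXiv:2111.12219 — 3 statements merged into one kernel-verified Lean document; each statement's English description precedes it below -/
import Mathlib

section
/- Let η, θ ∈ ℝ with 0 < η and η > A₊², where A₊ = (1+η)cos(2θ)/2. Set A₋ = (1−η)cos(2θ)/2, B = √(η − A₊²), and φ = arccos(A₊/√η). Then for every natural number t, the t-th power of G_p(η,θ) = [[η cos 2θ, sin 2θ],[−η sin 2θ, cos 2θ]] equals ((√η)^t / B) · [[B cos(φt) − A₋ sin(φt), sin(φt) sin 2θ],[−η sin(φt) sin 2θ, B cos(φt) + A₋ sin(φt)]]. -/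
open Matrix Real

/-- The noisy Grover iteration with phase-flip noise of parameter `η`. -/
noncomputable def Gp (η θ : ℝ) : Matrix (Fin 2) (Fin 2) ℝ :=
  !![η * Real.cos (2 * θ), Real.sin (2 * θ); -η * Real.sin (2 * θ), Real.cos (2 * θ)]

theorem Gp_pow (η θ : ℝ) (hη : 0 < η)
    (Ap Am B φ : ℝ)
    (hAp : Ap = (1 + η) * Real.cos (2 * θ) / 2)
    (hAm : Am = (1 - η) * Real.cos (2 * θ) / 2)
    (hB : B = Real.sqrt (η - Ap ^ 2))
    (hφ : φ = Real.arccos (Ap / Real.sqrt η))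
    (h : Ap ^ 2 < η) (t : ℕ) :
    (Gp η θ) ^ t =
      ((Real.sqrt η) ^ t / B) •
        !![B * Real.cos (φ * t) - Am * Real.sin (φ * t),
            Real.sin (φ * t) * Real.sin (2 * θ);
           -η * Real.sin (φ * t) * Real.sin (2 * θ),
            B * Real.cos (φ * t) + Am * Real.sin (φ * t)] := by
  have hu : 0 < Real.sqrt η := Real.sqrt_pos.mpr hη
  have hu2 : Real.sqrt η ^ 2 = η := Real.sq_sqrt hη.le
  have hB2 : B ^ 2 = η - Ap ^ 2 := by rw [hB]; exact Real.sq_sqrt (by linarith)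
  have hB2' : B ^ 2 = η - ((1 + η) * Real.cos (2 * θ) / 2) ^ 2 := by
    rw [hB2, hAp]
  have hBpos : 0 < B := by rw [hB]; exact Real.sqrt_pos.mpr (by linarith)
  have habs : |Ap / Real.sqrt η| ≤ 1 := by
    rw [abs_div, abs_of_pos hu, div_le_one hu]
    nlinarith [abs_nonneg Ap, sq_abs Ap, sq_abs (Real.sqrt η)]
  have hcos : Real.cos φ = Ap / Real.sqrt η := by
    rw [hφ, Real.cos_arccos (abs_le.mp habs).1 (abs_le.mp habs).2]
  have hsin : Real.sin φ = B / Real.sqrt η := by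
    rw [hφ, Real.sin_arccos, hB, div_pow, hu2, one_sub_div hη.ne',
      Real.sqrt_div (by linarith)]
  have hpyth : Real.sin (2 * θ) ^ 2 = 1 - Real.cos (2 * θ) ^ 2 := by
    nlinarith [Real.sin_sq_add_cos_sq (2 * θ)]
  induction t with
  | zero =>
    ext i j
    fin_cases i <;> fin_cases j <;>
      simp [Matrix.one_apply, hBpos.ne']
  | succ n ih =>
    have key : (!![B * Real.cos (φ * n) - Am * Real.sin (φ * n),
            Real.sin (φ * n) * Real.sin (2 * θ);
           -η * Real.sin (φ * n) * Real.sin (2 * θ),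
            B * Real.cos (φ * n) + Am * Real.sin (φ * n)] : Matrix (Fin 2) (Fin 2) ℝ)
        * Gp η θ = Real.sqrt η •
          !![B * Real.cos (φ * (n+1:ℕ)) - Am * Real.sin (φ * (n+1:ℕ)),
            Real.sin (φ * (n+1:ℕ)) * Real.sin (2 * θ);
           -η * Real.sin (φ * (n+1:ℕ)) * Real.sin (2 * θ),
            B * Real.cos (φ * (n+1:ℕ)) + Am * Real.sin (φ * (n+1:ℕ))] := by
      have hc : (((n:ℝ)+1)) = ((n+1:ℕ):ℝ) := by push_cast; ring
      ext i j
      fin_cases i <;> fin_cases j <;>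
        · simp only [Gp, Matrix.mul_apply, Fin.sum_univ_two, Matrix.smul_apply,
            Matrix.cons_val', Matrix.cons_val_zero, Matrix.cons_val_one, Matrix.head_cons,
            Matrix.head_fin_const, Matrix.empty_val', Matrix.cons_val_fin_one, smul_eq_mul,
            Matrix.of_apply, Fin.zero_eta, Fin.mk_one]
          rw [← hc]; simp only [mul_add, mul_one, Real.cos_add, Real.sin_add, hcos, hsin]
          field_simp
          rw [hAp, hAm]
          first
            | linear_combination Real.sin (φ * (n:ℝ)) * hB2' -
                η * Real.sin (φ * (n:ℝ)) * hpyth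
            | ring
    rw [pow_succ, ih, Matrix.smul_mul, key, smul_smul]
    congr 1
    field_simp
    ring
end

section
/- Let η, θ ∈ ℝ with 0 < η and η > A₊², where A₊ = (1+η)cos(2θ)/2, A₋ = (1−η)cos(2θ)/2, B = √(η − A₊²), φ = arccos(A₊/√η). Let v₀ = (sin θ, cos θ) ∈ ℝ² and for t ∈ ℕ let r_z(t) be the second component of G_p(η,θ)^t · v₀. Then the success probability P_p(t) := (1 − r_z(t))/2 satisfies P_p(t) = 1/2 + ((√η)^t / (2B)) · [η sin(φt) sin(2θ) sin θ − (B cos(φt) + A₋ sin(φt)) cos θ]. -/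
set_option maxHeartbeats 800000

open Matrix Real

theorem Gp_success_probability (η θ : ℝ) (hη : 0 < η)
    (Ap Am B φ : ℝ)
    (hAp : Ap = (1 + η) * Real.cos (2 * θ) / 2)
    (hAm : Am = (1 - η) * Real.cos (2 * θ) / 2)
    (hB : B = Real.sqrt (η - Ap ^ 2))
    (hφ : φ = Real.arccos (Ap / Real.sqrt η))
    (h : Ap ^ 2 < η) (t : ℕ) :
    (1 - ((Gp η θ) ^ t).mulVec ![Real.sin θ, Real.cos θ] 1) / 2 =
      1 / 2 + ((Real.sqrt η) ^ t / (2 * B)) *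
        (η * Real.sin (φ * t) * Real.sin (2 * θ) * Real.sin θ -
          (B * Real.cos (φ * t) + Am * Real.sin (φ * t)) * Real.cos θ) := by
  set q := Real.sqrt η with hqdef
  have hq0 : 0 < q := Real.sqrt_pos.mpr hη
  have hq2 : q ^ 2 = η := Real.sq_sqrt hη.le
  have hB0 : 0 < B := hB ▸ Real.sqrt_pos.mpr (by linarith)
  have hB2 : B ^ 2 = η - Ap ^ 2 := hB ▸ Real.sq_sqrt (by linarith)
  have hApq : |Ap / q| ≤ 1 := by
    rw [abs_div, abs_of_pos hq0, div_le_one hq0]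
    nlinarith [abs_nonneg Ap, sq_abs Ap]
  have hcosφ : Real.cos φ = Ap / q := by
    rw [hφ, Real.cos_arccos (by linarith [abs_le.mp hApq]) (by linarith [abs_le.mp hApq])]
  have hsinφ : Real.sin φ = B / q := by
    rw [hφ, Real.sin_arccos]
    have h1 : 1 - (Ap / q) ^ 2 = (B / q) ^ 2 := by
      rw [div_pow, div_pow, hB2, hq2]
      field_simp
    rw [h1, Real.sqrt_sq (by positivity)]
  -- Cayley-Hamilton relation for Gp
  have hG2 : Gp η θ * Gp η θ = (2 * Ap) • Gp η θ - η • (1 : Matrix (Fin 2) (Fin 2) ℝ) := by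
    ext i j
    fin_cases i <;> fin_cases j <;>
      simp [Gp, Matrix.mul_apply, Fin.sum_univ_two, Matrix.one_apply] <;>
      rw [hAp] <;> nlinarith [Real.sin_sq_add_cos_sq (2 * θ)]
  set α : ℕ → ℝ := fun t => q ^ t / B * Real.sin (φ * t) with hα
  set β : ℕ → ℝ := fun t => q ^ t / B * (B * Real.cos (φ * t) - Ap * Real.sin (φ * t)) with hβ
  have key : ∀ s : ℕ, (Gp η θ) ^ s = α s • Gp η θ + β s • (1 : Matrix (Fin 2) (Fin 2) ℝ) := by
    intro s
    induction s with
    | zero => simp [hα, hβ, mul_inv_cancel₀ hB0.ne', inv_mul_cancel₀ hB0.ne']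
    | succ n ih =>
        rw [pow_succ, ih, add_mul, Matrix.smul_mul, Matrix.smul_mul, hG2, Matrix.one_mul]
        have hαn : α (n + 1) = 2 * Ap * α n + β n := by
          simp only [hα, hβ]
          push_cast
          rw [mul_add, mul_one, Real.sin_add, hcosφ, hsinφ]
          field_simp
          ring
        have hβn : β (n + 1) = -η * α n := by
          simp only [hα, hβ]
          push_cast
          rw [mul_add, mul_one, Real.sin_add, Real.cos_add, hcosφ, hsinφ]
          field_simp
          linear_combination (-(q ^ (n + 1) * Real.sin (φ * n))) * hB2
        rw [hαn, hβn]
        module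
  rw [key t]
  have hmv : (α t • Gp η θ + β t • (1 : Matrix (Fin 2) (Fin 2) ℝ)).mulVec
      ![Real.sin θ, Real.cos θ] 1 =
      α t * (-η * Real.sin (2 * θ) * Real.sin θ + Real.cos (2 * θ) * Real.cos θ) +
        β t * Real.cos θ := by
    simp [Gp, Matrix.add_mulVec, Matrix.smul_mulVec, Matrix.one_mulVec,
      Matrix.mulVec, dotProduct, Fin.sum_univ_two]
    ring
  rw [hmv]
  simp only [hα, hβ]
  have hAmrel : Real.cos (2 * θ) - Ap = Am := by rw [hAp, hAm]; ring
  field_simp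
  linear_combination (-(q ^ t * Real.sin (φ * t) * Real.cos θ)) * hAmrel
end

section
/- Let η, θ ∈ ℝ with 0 < η < 1 and η > A₊², where A₊ = (1+η)cos(2θ)/2, and let v₀ = (sin θ, cos θ) ∈ ℝ². For t ∈ ℕ let P_p(t) = (1 − r_z(t))/2, where r_z(t) is the second component of G_p(η,θ)^t · v₀ and G_p(η,θ) = [[η cos 2θ, sin 2θ],[−η sin 2θ, cos 2θ]]. Then P_p(t) converges to 1/2 as t → ∞; moreover |P_p(t) − 1/2| ≤ C·(√η)^t for the constant C = (η·|sin 2θ·sin θ| + (B + |A₋|)·|cos θ|)/(2B), where A₋ = (1−η)cos(2θ)/2 and B = √(η − A₊²). Hence the success probability of Grover's algorithm with phase-flip noise decays exponentially toward 1/2. -/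
open Matrix Real Filter

theorem Gp_success_probability_decays_to_half (η θ : ℝ) (hη0 : 0 < η) (hη1 : η < 1)
    (Ap Am B : ℝ)
    (hAp : Ap = (1 + η) * Real.cos (2 * θ) / 2)
    (hAm : Am = (1 - η) * Real.cos (2 * θ) / 2)
    (hB : B = Real.sqrt (η - Ap ^ 2))
    (h : Ap ^ 2 < η)
    (P : ℕ → ℝ)
    (hP : P = fun t : ℕ =>
      (1 - ((Gp η θ) ^ t).mulVec ![Real.sin θ, Real.cos θ] 1) / 2) :
    Filter.Tendsto P Filter.atTop (nhds (1 / 2)) ∧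
    (∀ t : ℕ, |P t - 1 / 2| ≤
      ((η * |Real.sin (2 * θ) * Real.sin θ| + (B + |Am|) * |Real.cos θ|) / (2 * B)) *
        (Real.sqrt η) ^ t) := by
  set s := Real.sqrt η with hs
  have hs0 : 0 < s := Real.sqrt_pos.mpr hη0
  have hs2 : s ^ 2 = η := Real.sq_sqrt hη0.le
  have hs1 : s < 1 := by nlinarith
  have hB0 : 0 < B := hB ▸ Real.sqrt_pos.mpr (by linarith)
  have hB2 : B ^ 2 = η - Ap ^ 2 := hB ▸ Real.sq_sqrt (by linarith)
  set φ := Real.arccos (Ap / s) with hφ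
  have hbd : -(1:ℝ) ≤ Ap / s ∧ Ap / s ≤ 1 := by
    constructor
    · rw [le_div_iff₀ hs0]; nlinarith
    · rw [div_le_one hs0]; nlinarith
  have hcos : Real.cos φ = Ap / s := Real.cos_arccos hbd.1 hbd.2
  have hsin : Real.sin φ = B / s := by
    rw [hφ, Real.sin_arccos]
    have h1 : 1 - (Ap / s) ^ 2 = (η - Ap ^ 2) / s ^ 2 := by
      field_simp; linarith
    rw [h1, Real.sqrt_div (by linarith), Real.sqrt_sq hs0.le, ← hB]
  have pyth : Real.sin (2*θ) ^ 2 + Real.cos (2*θ) ^ 2 = 1 := Real.sin_sq_add_cos_sq _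
  have hApAm : Ap - Am = η * Real.cos (2*θ) ∧ Ap + Am = Real.cos (2*θ) := by
    constructor <;> (rw [hAp, hAm]; ring)
  -- closed form, multiplied by B
  have key : ∀ t : ℕ,
      B * ((Gp η θ) ^ t).mulVec ![Real.sin θ, Real.cos θ] 0
        = s ^ t * (B * Real.sin θ * Real.cos (t * φ)
            + (Real.sin (2*θ) * Real.cos θ - Am * Real.sin θ) * Real.sin (t * φ)) ∧
      B * ((Gp η θ) ^ t).mulVec ![Real.sin θ, Real.cos θ] 1
        = s ^ t * (B * Real.cos θ * Real.cos (t * φ)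
            + (Am * Real.cos θ - η * Real.sin (2*θ) * Real.sin θ) * Real.sin (t * φ)) := by
    intro t
    induction t with
    | zero => simp
    | succ t ih =>
      obtain ⟨ihx, ihz⟩ := ih
      have hpow : (Gp η θ) ^ (t+1) = Gp η θ * (Gp η θ) ^ t := by
        rw [pow_succ']
      rw [hpow, ← Matrix.mulVec_mulVec]
      set w := ((Gp η θ) ^ t).mulVec ![Real.sin θ, Real.cos θ] with hw
      have hx0 : (Gp η θ).mulVec w 0 = η * Real.cos (2*θ) * w 0 + Real.sin (2*θ) * w 1 := by
        simp [Gp, Matrix.mulVec, dotProduct, Fin.sum_univ_two]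
      have hx1 : (Gp η θ).mulVec w 1 = -η * Real.sin (2*θ) * w 0 + Real.cos (2*θ) * w 1 := by
        simp [Gp, Matrix.mulVec, dotProduct, Fin.sum_univ_two]
      have harg : ((t+1 : ℕ) : ℝ) * φ = t * φ + φ := by push_cast; ring
      have hC : Real.cos ((t+1 : ℕ) * φ) = Real.cos (t*φ) * (Ap/s) - Real.sin (t*φ) * (B/s) := by
        rw [harg, Real.cos_add, hcos, hsin]
      have hS : Real.sin ((t+1 : ℕ) * φ) = Real.sin (t*φ) * (Ap/s) + Real.cos (t*φ) * (B/s) := by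
        rw [harg, Real.sin_add, hcos, hsin]
      obtain ⟨hd, hsum⟩ := hApAm
      constructor
      · rw [hx0, hC, hS]
        have expand : B * (η * Real.cos (2*θ) * w 0 + Real.sin (2*θ) * w 1)
            = η * Real.cos (2*θ) * (B * w 0) + Real.sin (2*θ) * (B * w 1) := by ring
        rw [expand, ihx, ihz]
        have hsp : s ^ (t+1) = s * s ^ t := by ring
        rw [hsp]
        field_simp
        linear_combination (
          (-(B * Real.sin θ * Real.cos ((t:ℝ) * φ))) * hd
          + Real.sin ((t:ℝ) * φ) * (
              (-(Real.sin (2*θ) * Real.cos θ)) * hd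
              + Real.sin θ * (Am * hd + hB2 - η * pyth
                  - (η * Real.cos (2*θ) + (Ap - Am - η * Real.cos (2*θ))) * hsum
                  - Real.cos (2*θ) * hd)))
      · rw [hx1, hC, hS]
        have expand : B * (-η * Real.sin (2*θ) * w 0 + Real.cos (2*θ) * w 1)
            = -η * Real.sin (2*θ) * (B * w 0) + Real.cos (2*θ) * (B * w 1) := by ring
        rw [expand, ihx, ihz]
        have hsp : s ^ (t+1) = s * s ^ t := by ring
        rw [hsp]
        field_simp
        linear_combination (
          (-(B * Real.cos θ * Real.cos ((t:ℝ) * φ))) * hsum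
          + Real.sin ((t:ℝ) * φ) * (
              Real.cos θ * (hB2 - η * pyth
                  - (Am + η * Real.cos (2*θ) + (Ap - Am - η * Real.cos (2*θ))) * hsum
                  - Real.cos (2*θ) * hd)
              + Real.sin θ * η * Real.sin (2*θ) * hsum))
  -- bound
  have bound : ∀ t : ℕ, |P t - 1/2| ≤
      ((η * |Real.sin (2 * θ) * Real.sin θ| + (B + |Am|) * |Real.cos θ|) / (2 * B)) * s ^ t := by
    intro t
    have hz := (key t).2
    set E := B * Real.cos θ * Real.cos (t * φ)
        + (Am * Real.cos θ - η * Real.sin (2*θ) * Real.sin θ) * Real.sin (t * φ) with hE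
    have hzval : ((Gp η θ) ^ t).mulVec ![Real.sin θ, Real.cos θ] 1 = s ^ t * E / B := by
      field_simp at hz ⊢; linarith
    have hPt : P t - 1/2 = -(s ^ t * E / B) / 2 := by
      rw [hP]; simp only [hzval]; ring
    have hst : 0 ≤ s ^ t := pow_nonneg hs0.le t
    have hC1 : |Real.cos (t*φ)| ≤ 1 := Real.abs_cos_le_one _
    have hS1 : |Real.sin (t*φ)| ≤ 1 := Real.abs_sin_le_one _
    have e1 : |B * Real.cos θ * Real.cos (t*φ)| ≤ B * |Real.cos θ| := by
      rw [abs_mul, abs_mul, abs_of_pos hB0]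
      exact mul_le_of_le_one_right (mul_nonneg hB0.le (abs_nonneg _)) hC1
    have h3 : |Am * Real.cos θ - η * Real.sin (2*θ) * Real.sin θ|
        ≤ |Am| * |Real.cos θ| + η * |Real.sin (2*θ) * Real.sin θ| := by
      have h4 : Am * Real.cos θ - η * Real.sin (2*θ) * Real.sin θ
          = Am * Real.cos θ - η * (Real.sin (2*θ) * Real.sin θ) := by ring
      rw [h4]
      refine (abs_sub _ _).trans ?_
      rw [abs_mul, abs_mul, abs_of_pos hη0]
    have e2 : |(Am * Real.cos θ - η * Real.sin (2*θ) * Real.sin θ) * Real.sin (t*φ)|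
        ≤ |Am| * |Real.cos θ| + η * |Real.sin (2*θ) * Real.sin θ| := by
      rw [abs_mul]
      exact (mul_le_of_le_one_right (abs_nonneg _) hS1).trans h3
    have hEb : |E| ≤ η * |Real.sin (2 * θ) * Real.sin θ| + (B + |Am|) * |Real.cos θ| := by
      calc |E| ≤ |B * Real.cos θ * Real.cos (t*φ)|
            + |(Am * Real.cos θ - η * Real.sin (2*θ) * Real.sin θ) * Real.sin (t*φ)| := abs_add_le _ _
        _ ≤ _ := by linarith
    have heq : |(-(s ^ t * E / B)) / 2| = s ^ t * |E| / (2 * B) := by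
      rw [abs_div, abs_neg, abs_div, abs_mul, abs_of_nonneg hst, abs_of_pos hB0,
        abs_of_pos (by norm_num : (0:ℝ) < 2)]
      ring
    rw [hPt, heq]
    have hgoal : ((η * |Real.sin (2 * θ) * Real.sin θ| + (B + |Am|) * |Real.cos θ|) / (2 * B)) * s ^ t
        = s ^ t * (η * |Real.sin (2 * θ) * Real.sin θ| + (B + |Am|) * |Real.cos θ|) / (2 * B) := by
      ring
    rw [hgoal]
    gcongr
  refine ⟨?_, fun t => bound t⟩
  have hconv : Tendsto (fun t : ℕ => P t - 1/2) atTop (nhds 0) := by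
    apply squeeze_zero_norm (fun t => bound t)
    have := tendsto_pow_atTop_nhds_zero_of_lt_one hs0.le hs1
    simpa using this.const_mul ((η * |Real.sin (2 * θ) * Real.sin θ| + (B + |Am|) * |Real.cos θ|) / (2 * B))
  have := hconv.add_const (1/2)
  simpa using this
end
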